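/- Let E be a standard Borel space, (F, 𝓕) a measurable space, T : E → F measurable and surjective, π a probability measure on E, and P a proposal kernel on E with ν_P^⊤ ≪ ν_P. If there exists a measurable function β : F × F → [0,1] such that β(T(x), T(x')) = α_P(x, x') for all x, x' ∈ E, then α_{T_*P}(y, y') = β(y, y') for ν_{T_*P}-almost every (y, y') ∈ F × F. In particular, if T is bijective, then α_{T_*P}(y, y') = α_P(T^{-1}(y), T^{-1}(y')). -/

import Mathlib

open MeasureTheory ProbabilityTheory
open scoped ENNReal NNReal

/-- The pushforward transition kernel `T_*P(y, B) := E[P(X, T⁻¹(B)) | T(X) = y]`, `X ∼ π`,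
realized via a regular conditional distribution `condDistrib id T π` of `X` given `T(X)`. -/
noncomputable def pushKernel {E F : Type*} [MeasurableSpace E] [StandardBorelSpace E] [Nonempty E]
    [MeasurableSpace F] (T : E → F) (π : Measure E) [IsFiniteMeasure π] (K : Kernel E E) :
    Kernel F F :=
  Kernel.map (K ∘ₖ condDistrib id T π) T

/-- The Metropolis–Hastings acceptance probability `α_P(x, x') := min{1, dν_P^⊤/dν_P (x, x')}`,
where `ν_P(dx dx') := P(x, dx') π(dx)` and `ν_P^⊤` is its swap. -/
noncomputable def mhAccept {E : Type*} [MeasurableSpace E] (π : Measure E) (P : Kernel E E) :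
    E × E → ℝ≥0∞ :=
  fun p => min 1 (((π ⊗ₘ P).map Prod.swap).rnDeriv (π ⊗ₘ P) p)

/-- The pushforward acceptance probability
`α_{T_*P}(y, y') := min{1, d𝐓_*ν_P^⊤/d𝐓_*ν_P (y, y')}` with `𝐓(x, x') = (T x, T x')`. -/
noncomputable def pushAccept {E F : Type*} [MeasurableSpace E] [MeasurableSpace F]
    (T : E → F) (π : Measure E) (P : Kernel E E) : F × F → ℝ≥0∞ :=
  fun q => min 1 ((((π ⊗ₘ P).map Prod.swap).map (Prod.map T T)).rnDeriv
    ((π ⊗ₘ P).map (Prod.map T T)) q)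

/-- If there is a measurable `β : F × F → [0, 1]` with
`β(T x, T x') = α_P(x, x')` for all `x, x' ∈ E`, then `α_{T_*P} = β`
`ν_{T_*P}`-almost everywhere, where `ν_{T_*P}(dy dy') := T_*P(y, dy') T_*π(dy)`.
In particular, if `T` is bijective (a measurable equivalence), then
`α_{T_*P}(y, y') = α_P(T⁻¹ y, T⁻¹ y')` (`ν_{T_*P}`-a.e.). -/

lemma min_one_rnDeriv_map_ae_eq {γ δ : Type*} [MeasurableSpace γ] [MeasurableSpace δ]
    (μ μ' : Measure γ) [IsFiniteMeasure μ] [IsFiniteMeasure μ']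
    (h : μ' ≪ μ) {f : γ → δ} (hf : Measurable f)
    {β : δ → ℝ≥0∞} (hβ : Measurable β) (hβ1 : ∀ q, β q ≤ 1)
    (hfac : ∀ x, β (f x) = min 1 (μ'.rnDeriv μ x)) :
    ∀ᵐ q ∂(μ.map f), min 1 ((μ'.map f).rnDeriv (μ.map f) q) = β q := by
  have hμf : IsFiniteMeasure (μ.map f) := Measure.isFiniteMeasure_map μ f
  have hμ'f : IsFiniteMeasure (μ'.map f) := Measure.isFiniteMeasure_map μ' f
  set μf := μ.map f with hμfdef
  set g := (μ'.map f).rnDeriv μf with hgdef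
  have hacf : μ'.map f ≪ μf := h.map hf
  have hgm : Measurable g := Measure.measurable_rnDeriv _ _
  have hrm : Measurable (μ'.rnDeriv μ) := Measure.measurable_rnDeriv _ _
  have hint : ∀ A : Set δ, MeasurableSet A →
      ∫⁻ q in A, g q ∂μf = ∫⁻ x in f ⁻¹' A, μ'.rnDeriv μ x ∂μ := by
    intro A hA
    rw [Measure.setLIntegral_rnDeriv hacf, Measure.map_apply hf hA,
      ← Measure.setLIntegral_rnDeriv h]
  set S : Set δ := {q | β q < 1} with hSdef
  have hSm : MeasurableSet S := measurableSet_lt hβ measurable_const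
  -- on S, where r < 1, r = β ∘ f
  have hr_eq : ∀ x, f x ∈ S → μ'.rnDeriv μ x = β (f x) := by
    intro x hx
    have h1 : min 1 (μ'.rnDeriv μ x) < 1 := by rw [← hfac x]; exact hx
    have h2 : μ'.rnDeriv μ x < 1 := by
      by_contra hcon
      push_neg at hcon
      rw [min_eq_left hcon] at h1
      exact lt_irrefl _ h1
    rw [hfac x, min_eq_right h2.le]
  -- on Sᶜ, r ≥ 1
  have hr_ge : ∀ x, f x ∉ S → 1 ≤ μ'.rnDeriv μ x := by
    intro x hx
    have hb1 : β (f x) = 1 := le_antisymm (hβ1 _) (not_lt.mp hx)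
    rw [hfac x] at hb1
    exact min_eq_left_iff.mp hb1
  -- Step 1
  have h1 : ∀ᵐ q ∂μf, q ∈ S → g q = β q := by
    rw [← ae_restrict_iff' hSm]
    refine ae_eq_of_forall_setLIntegral_eq_of_sigmaFinite hgm hβ fun s hs _ => ?_
    rw [Measure.restrict_restrict hs,
      hint _ (hs.inter hSm), setLIntegral_map (hs.inter hSm) hβ hf]
    refine setLIntegral_congr_fun (hf (hs.inter hSm)) (fun x hx => ?_)
    exact hr_eq x hx.2
  -- Step 2
  have h2 : ∀ᵐ q ∂μf, q ∉ S → 1 ≤ g q := by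
    set A : Set δ := Sᶜ ∩ {q | g q < 1} with hAdef
    have hAm : MeasurableSet A := hSm.compl.inter (measurableSet_lt hgm measurable_const)
    have hle : μf A ≤ ∫⁻ q in A, g q ∂μf := by
      rw [hint _ hAm, hμfdef, Measure.map_apply hf hAm, ← setLIntegral_one]
      refine setLIntegral_mono hrm fun x hx => ?_
      exact hr_ge x hx.1
    have hge : ∫⁻ q in A, g q ∂μf ≤ μf A := by
      rw [← setLIntegral_one]
      exact setLIntegral_mono measurable_const fun x hx => hx.2.le
    have heq : ∫⁻ q in A, g q ∂μf = μf A := le_antisymm hge hle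
    have hzero : μf A = 0 := by
      have hfin : ∫⁻ q in A, g q ∂μf ≠ ∞ := by rw [heq]; exact measure_ne_top _ _
      have hle_ae : g ≤ᵐ[μf.restrict A] fun _ => 1 :=
        (ae_restrict_mem hAm).mono fun x hx => hx.2.le
      have hsub : ∫⁻ q in A, (1 - g q) ∂μf = 0 := by
        rw [lintegral_sub hgm hfin hle_ae, setLIntegral_one, heq, tsub_self]
      have hz := (lintegral_eq_zero_iff (measurable_const.sub hgm)).mp hsub
      have := (ae_restrict_mem hAm).and hz
      have hbad : ∀ᵐ q ∂μf.restrict A, False := by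
        refine this.mono fun q hq => ?_
        have h1 : (0 : ℝ≥0∞) < 1 - g q := tsub_pos_of_lt hq.1.2
        have h2 : 1 - g q = 0 := by simpa using hq.2
        exact h1.ne' h2
      have : μf.restrict A Set.univ = 0 := by
        simpa [ae_iff] using hbad
      rwa [Measure.restrict_apply_univ] at this
    rw [ae_iff]
    have hset : {q | ¬(q ∉ S → 1 ≤ g q)} = A := by
      ext q
      simp only [hAdef, Set.mem_setOf_eq, Set.mem_inter_iff, Set.mem_compl_iff,
        Classical.not_imp, not_le]
    rw [hset]
    exact hzero
  filter_upwards [h1, h2] with q hq1 hq2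
  by_cases hqS : q ∈ S
  · rw [hq1 hqS]
    exact min_eq_right (hβ1 q)
  · have hb1 : β q = 1 := le_antisymm (hβ1 q) (not_lt.mp hqS)
    rw [min_eq_left (hq2 hqS), hb1]

lemma pushMeasure_eq {E F : Type*} [MeasurableSpace E] [StandardBorelSpace E] [Nonempty E]
    [MeasurableSpace F] (T : E → F) (hT : Measurable T)
    (π : Measure E) [IsProbabilityMeasure π] (P : Kernel E E) [IsMarkovKernel P] :
    (π.map T) ⊗ₘ pushKernel T π P = (π ⊗ₘ P).map (Prod.map T T) := by
  have hκ : (π.map T) ⊗ₘ condDistrib id T π = π.map (fun a => (T a, a)) := by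
    rw [condDistrib_def]
    have hfst : π.map T = (π.map fun a => (T a, id a)).fst :=
      (Measure.fst_map_prodMk measurable_id).symm
    rw [hfst, Measure.disintegrate _ (Measure.condKernel _)]
    simp only [id_eq]
  haveI : IsMarkovKernel (pushKernel T π P) := Kernel.IsMarkovKernel.map _ hT
  ext s hs
  set s' : Set (F × E) := Prod.map id T ⁻¹' s with hs'def
  have hs' : MeasurableSet s' := (measurable_id.prodMap hT) hs
  set G : F × E → ℝ≥0∞ := fun p => (P.comap Prod.snd measurable_snd) p (Prod.mk p ⁻¹'
    {q : (F × E) × E | (q.1.1, q.2) ∈ s'}) with hGdef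
  have htm : MeasurableSet {q : (F × E) × E | (q.1.1, q.2) ∈ s'} :=
    (measurable_fst.fst.prodMk measurable_snd) hs'
  have hG : Measurable G := Kernel.measurable_kernel_prodMk_left htm
  have hGapp : ∀ y x, G (y, x) = P x (T ⁻¹' (Prod.mk y ⁻¹' s)) := by
    intro y x
    rw [hGdef]
    congr 1
  calc (π.map T ⊗ₘ pushKernel T π P) s
      = ∫⁻ y, pushKernel T π P y (Prod.mk y ⁻¹' s) ∂(π.map T) := Measure.compProd_apply hs
    _ = ∫⁻ y, ∫⁻ x, G (y, x) ∂(condDistrib id T π y) ∂(π.map T) := by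
        refine lintegral_congr fun y => ?_
        rw [pushKernel, Kernel.map_apply' _ hT _ (measurable_prodMk_left hs),
          Kernel.comp_apply' _ _ _ (hT (measurable_prodMk_left hs))]
        refine lintegral_congr fun x => (hGapp y x).symm
    _ = ∫⁻ p, G p ∂((π.map T) ⊗ₘ condDistrib id T π) := (Measure.lintegral_compProd hG).symm
    _ = ∫⁻ p, G p ∂(π.map (fun a => (T a, a))) := by rw [hκ]
    _ = ∫⁻ x, G (T x, x) ∂π := lintegral_map hG (hT.prodMk measurable_id)
    _ = ∫⁻ x, P x (Prod.mk x ⁻¹' (Prod.map T T ⁻¹' s)) ∂π := by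
        refine lintegral_congr fun x => ?_
        rw [hGapp]
        rfl
    _ = (π ⊗ₘ P) (Prod.map T T ⁻¹' s) := (Measure.compProd_apply ((hT.prodMap hT) hs)).symm
    _ = ((π ⊗ₘ P).map (Prod.map T T)) s := (Measure.map_apply (hT.prodMap hT) hs).symm

theorem pushAccept_eq_of_factorization
    {E F : Type*} [MeasurableSpace E] [StandardBorelSpace E] [Nonempty E] [MeasurableSpace F]
    (T : E → F) (hT : Measurable T) (hTsurj : Function.Surjective T)
    (π : Measure E) [IsProbabilityMeasure π] (P : Kernel E E) [IsMarkovKernel P]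
    (hac : ((π ⊗ₘ P).map Prod.swap) ≪ (π ⊗ₘ P)) :
    (∀ β : F × F → ℝ≥0∞, Measurable β → (∀ q, β q ≤ 1) →
        (∀ x x' : E, β (T x, T x') = mhAccept π P (x, x')) →
        ∀ᵐ q ∂((π.map T) ⊗ₘ pushKernel T π P), pushAccept T π P q = β q) ∧
      ∀ e : E ≃ᵐ F, (⇑e = T) →
        ∀ᵐ q ∂((π.map T) ⊗ₘ pushKernel T π P),
          pushAccept T π P q = mhAccept π P (e.symm q.1, e.symm q.2) := by
  haveI : IsMarkovKernel (pushKernel T π P) := Kernel.IsMarkovKernel.map _ hT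
  haveI : IsFiniteMeasure ((π ⊗ₘ P).map Prod.swap) := Measure.isFiniteMeasure_map _ _
  have hkey := pushMeasure_eq T hT π P
  have hmain : ∀ β : F × F → ℝ≥0∞, Measurable β → (∀ q, β q ≤ 1) →
      (∀ x x' : E, β (T x, T x') = mhAccept π P (x, x')) →
      ∀ᵐ q ∂((π.map T) ⊗ₘ pushKernel T π P), pushAccept T π P q = β q := by
    intro β hβ hβ1 hfac
    rw [hkey]
    have h := min_one_rnDeriv_map_ae_eq (π ⊗ₘ P) ((π ⊗ₘ P).map Prod.swap) hac
      (hT.prodMap hT) hβ hβ1 (fun p => hfac p.1 p.2)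
    exact h
  refine ⟨hmain, fun e he => ?_⟩
  refine hmain _ ?_ (fun q => min_le_left _ _) ?_
  · exact (measurable_const.min (Measure.measurable_rnDeriv _ _)).comp
      ((e.symm.measurable.comp measurable_fst).prodMk (e.symm.measurable.comp measurable_snd))
  · intro x x'
    simp only [← he, e.symm_apply_apply]
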